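/- arXiv:2311.01440 — 2 statements merged into one kernel-verified Lean document; each statement's English description precedes it below -/
import Mathlib

section
/- Let A and σ be n×n real matrices satisfying the Kalman rank condition. Then for every t > 0 the covariance matrix Σ_t := ∫₀^t e^{(t−s)A} σ σᵀ e^{(t−s)Aᵀ} ds is invertible (equivalently, positive definite). -/
/- Setting: n×n real matrices A, σ; SDE dx = Ax dt + σ dB on ℝⁿ. -/

open MeasureTheory Matrix

noncomputable section

abbrev Vec (n : ℕ) := Fin n → ℝ
abbrev Mat (n : ℕ) := Matrix (Fin n) (Fin n) ℝ

/-- matrix exponential e^M -/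
def mexp {n : ℕ} (M : Mat n) : Mat n := NormedSpace.exp M

/-- The n×n² Kalman block matrix [σ, Aσ, A²σ, …, A^{n-1}σ]. -/
def kalmanMatrix {n : ℕ} (A σ : Mat n) : Matrix (Fin n) (Fin n × Fin n) ℝ :=
  Matrix.of fun i p => (A ^ (p.1 : ℕ) * σ) i p.2

/-- The Kalman rank condition: rank [σ, Aσ, …, A^{n-1}σ] = n. -/
def KalmanRank {n : ℕ} (A σ : Mat n) : Prop := (kalmanMatrix A σ).rank = n

/-- Σ_t = ∫₀ᵗ e^{(t-s)A} σσᵀ e^{(t-s)Aᵀ} ds, the integral taken entrywise. -/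
def SigmaMat {n : ℕ} (A σ : Mat n) (t : ℝ) : Mat n :=
  Matrix.of fun i j =>
    ∫ s in (0:ℝ)..t, (mexp ((t - s) • A) * (σ * σᵀ) * mexp ((t - s) • Aᵀ)) i j

open Classical in
/-- The positive semidefinite square root of a PSD matrix (junk value 0 otherwise). -/
def psdSqrt {n : ℕ} (M : Mat n) : Mat n := if h : M.PosSemidef then
    (h.1.eigenvectorUnitary : Mat n) *
      diagonal (RCLike.ofReal ∘ Real.sqrt ∘ h.1.eigenvalues) *
      (star h.1.eigenvectorUnitary : Mat n) else 0

/-- standard Gaussian measure on ℝⁿ -/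
def stdGaussian (n : ℕ) : Measure (Vec n) :=
  Measure.pi fun _ => ProbabilityTheory.gaussianReal 0 1

/-- The Markov semigroup: P_t f(x) = 𝔼[f(e^{tA}x + Σ_t^{1/2} Z)], Z standard Gaussian. -/
def Pt {n : ℕ} (A σ : Mat n) (t : ℝ) (f : Vec n → ℝ) (x : Vec n) : ℝ :=
  ∫ z, f (mexp (t • A) *ᵥ x + psdSqrt (SigmaMat A σ t) *ᵥ z) ∂(stdGaussian n)

/-- partial derivative ∂_i f(x) -/
def pd {n : ℕ} (i : Fin n) (f : Vec n → ℝ) (x : Vec n) : ℝ := fderiv ℝ f x (Pi.single i 1)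

/-- gradient ∇f(x) -/
def gradV {n : ℕ} (f : Vec n → ℝ) (x : Vec n) : Vec n := fun i => pd i f x

/-- Γ^G(f,g)(x) = ⟨G∇f(x), ∇g(x)⟩ -/
def GammaOp {n : ℕ} (G : Mat n) (f g : Vec n → ℝ) (x : Vec n) : ℝ :=
  (G *ᵥ gradV f x) ⬝ᵥ gradV g x

/-- The generator L f(x) = ⟨Ax, ∇f(x)⟩ + ½ Σᵢⱼ (σσᵀ)ᵢⱼ ∂ᵢ∂ⱼ f(x). -/
def Lop {n : ℕ} (A σ : Mat n) (f : Vec n → ℝ) (x : Vec n) : ℝ :=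
  (A *ᵥ x) ⬝ᵥ gradV f x + (1/2) * ∑ i, ∑ j, (σ * σᵀ) i j * pd i (pd j f) x

/-- Γ₂^G(f) = ½ L Γ^G(f) − Γ^G(f, Lf). -/
def Gamma2Op {n : ℕ} (A σ G : Mat n) (f : Vec n → ℝ) (x : Vec n) : ℝ :=
  (1/2) * Lop A σ (GammaOp G f f) x - GammaOp G f (Lop A σ f) x

/-- G_t = ∫₀ᵗ e^{-vA} σσᵀ e^{-vAᵀ} dv, entrywise. -/
def Gt {n : ℕ} (A σ : Mat n) (t : ℝ) : Mat n :=
  Matrix.of fun i j => ∫ v in (0:ℝ)..t, (mexp ((-v) • A) * (σ * σᵀ) * mexp ((-v) • Aᵀ)) i j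

/-- control distance ρ_t(x,y) = √⟨G_t⁻¹(x−y), x−y⟩ -/
def rhoT {n : ℕ} (A σ : Mat n) (t : ℝ) (x y : Vec n) : ℝ :=
  Real.sqrt (((Gt A σ t)⁻¹ *ᵥ (x - y)) ⬝ᵥ (x - y))

namespace Stmt0Aux

open scoped Matrix
open NormedSpace Set

attribute [local instance] Matrix.linftyOpSemiNormedRing Matrix.linftyOpNormedRing
  Matrix.linftyOpNormedAlgebra

variable {n : ℕ}

/-- M ↦ (C * M) *ᵥ x as a linear map. -/
def cmulLM (C : Mat n) (x : Vec n) : Mat n →ₗ[ℝ] Vec n where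
  toFun M := (C * M) *ᵥ x
  map_add' M N := by
    show (C * (M + N)) *ᵥ x = (C * M) *ᵥ x + (C * N) *ᵥ x
    rw [mul_add, Matrix.add_mulVec]
  map_smul' c M := by
    show (C * (c • M)) *ᵥ x = c • ((C * M) *ᵥ x)
    rw [mul_smul_comm, Matrix.smul_mulVec]

/-- M ↦ M *ᵥ x as a linear map. -/
def mulVecLM (x : Vec n) : Mat n →ₗ[ℝ] Vec n where
  toFun M := M *ᵥ x
  map_add' M N := Matrix.add_mulVec M N x
  map_smul' c M := by
    show (c • M) *ᵥ x = c • (M *ᵥ x)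
    rw [Matrix.smul_mulVec]

/-- entry extraction as a linear map -/
def entryLM (i j : Fin n) : Mat n →ₗ[ℝ] ℝ where
  toFun M := M i j
  map_add' _ _ := rfl
  map_smul' _ _ := rfl

lemma continuous_entry (i j : Fin n) : Continuous fun M : Mat n => M i j :=
  (entryLM i j).continuous_of_finiteDimensional

lemma continuous_mexp_smul (B : Mat n) (t : ℝ) :
    Continuous fun s : ℝ => mexp ((t - s) • B) := by
  have : Continuous fun s : ℝ => (t - s) • B :=
    ((continuous_const.sub continuous_id)).smul continuous_const
  exact exp_continuous.comp this

/-- mexp of a transposed scalar multiple -/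
lemma mexp_smul_transpose (B : Mat n) (u : ℝ) : mexp (u • Bᵀ) = (mexp (u • B))ᵀ := by
  rw [mexp, mexp, ← Matrix.transpose_smul, Matrix.exp_transpose]

/-- The integrand factors as P * Pᵀ. -/
lemma integrand_factor (A σ : Mat n) (u : ℝ) :
    mexp (u • A) * (σ * σᵀ) * mexp (u • Aᵀ)
      = (mexp (u • A) * σ) * (mexp (u • A) * σ)ᵀ := by
  rw [mexp_smul_transpose, Matrix.transpose_mul]
  simp only [mul_assoc]

lemma quad_eq (P : Mat n) (x : Vec n) :
    x ⬝ᵥ ((P * Pᵀ) *ᵥ x) = (Pᵀ *ᵥ x) ⬝ᵥ (Pᵀ *ᵥ x) := by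
  rw [← Matrix.mulVec_mulVec, Matrix.dotProduct_mulVec, ← Matrix.mulVec_transpose]

/-- if a matrix-curve killed by x on an open interval, so is its derivative curve -/
lemma deriv_step (B C : Mat n) (x : Vec n) {a b u : ℝ} (hu : u ∈ Set.Ioo a b)
    (h : ∀ v ∈ Set.Ioo a b, (C * mexp (v • B)) *ᵥ x = 0) :
    (C * (B * mexp (u • B))) *ᵥ x = 0 := by
  set L := (cmulLM C x).toContinuousLinearMap with hL
  have hder : HasDerivAt (fun v : ℝ => mexp (v • B)) (B * mexp (u • B)) u :=
    hasDerivAt_exp_smul_const' B u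
  have h1 : HasDerivAt (fun v : ℝ => L (mexp (v • B))) (L (B * mexp (u • B))) u :=
    L.hasFDerivAt.comp_hasDerivAt u hder
  have h2 : HasDerivAt (fun v : ℝ => L (mexp (v • B))) 0 u := by
    have hev : (fun v : ℝ => L (mexp (v • B))) =ᶠ[nhds u] fun _ => (0 : Vec n) := by
      filter_upwards [isOpen_Ioo.mem_nhds hu] with v hv
      simpa [hL, cmulLM] using h v hv
    exact (hasDerivAt_const u (0 : Vec n)).congr_of_eventuallyEq hev
  have := h1.unique h2
  simpa [hL, cmulLM] using this

lemma key_induction (B C : Mat n) (x : Vec n) {a b : ℝ}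
    (h : ∀ v ∈ Set.Ioo a b, (C * mexp (v • B)) *ᵥ x = 0) :
    ∀ (k : ℕ), ∀ u ∈ Set.Ioo a b, (C * (B ^ k * mexp (u • B))) *ᵥ x = 0 := by
  intro k
  induction k with
  | zero => intro u hu; simpa using h u hu
  | succ k ih =>
    intro u hu
    have h' : ∀ v ∈ Set.Ioo a b, ((C * B ^ k) * mexp (v • B)) *ᵥ x = 0 := by
      intro v hv
      have := ih v hv
      rwa [← mul_assoc] at this
    have := deriv_step B (C * B ^ k) x hu h'
    rw [show C * B ^ k * (B * mexp (u • B)) = C * (B ^ (k + 1) * mexp (u • B)) by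
      rw [pow_succ]; simp only [mul_assoc]] at this
    exact this

lemma kalman_inj (A σ : Mat n) (hK : KalmanRank A σ) (y : Vec n)
    (h : ∀ k : Fin n, ((A ^ (k : ℕ) * σ)ᵀ) *ᵥ y = 0) : y = 0 := by
  classical
  set K := kalmanMatrix A σ with hKdef
  have hKy : Kᵀ *ᵥ y = 0 := by
    funext p
    have := congrFun (h p.1) p.2
    simpa [Matrix.mulVec, dotProduct, K, kalmanMatrix, Matrix.transpose_apply] using this
  have hrank : Kᵀ.rank = n := by rw [Matrix.rank_transpose]; exact hK
  have hker : LinearMap.ker (Kᵀ.mulVecLin) = ⊥ := by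
    have hfr := LinearMap.finrank_range_add_finrank_ker (Kᵀ.mulVecLin)
    rw [show Module.finrank ℝ (LinearMap.range Kᵀ.mulVecLin) = n from hrank] at hfr
    have hdom : Module.finrank ℝ (Vec n) = n := by simp
    rw [hdom] at hfr
    have h0 : Module.finrank ℝ (LinearMap.ker Kᵀ.mulVecLin) = 0 := by omega
    exact Submodule.finrank_eq_zero.mp h0
  have hmem : y ∈ LinearMap.ker (Kᵀ.mulVecLin) := by
    rw [LinearMap.mem_ker, Matrix.mulVecLin_apply]
    exact hKy
  rw [hker] at hmem
  simpa using hmem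

lemma mexp_mulVec_eq_zero {B : Mat n} {u : ℝ} {x : Vec n}
    (h : mexp (u • B) *ᵥ x = 0) : x = 0 := by
  have hcomm : Commute ((-u) • B) (u • B) :=
    Commute.smul_left (Commute.smul_right (Commute.refl B) u) (-u)
  have hmul : mexp ((-u) • B) * mexp (u • B) = 1 := by
    rw [mexp, mexp, ← Matrix.exp_add_of_commute _ _ hcomm,
      show (-u) • B + u • B = 0 by module]
    exact NormedSpace.exp_zero
  calc x = (mexp ((-u) • B) * mexp (u • B)) *ᵥ x := by rw [hmul, Matrix.one_mulVec]
  _ = mexp ((-u) • B) *ᵥ (mexp (u • B) *ᵥ x) := by rw [← Matrix.mulVec_mulVec]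
  _ = 0 := by rw [h, Matrix.mulVec_zero]

/-- Main positivity statement. -/
lemma quadform_pos (A σ : Mat n) (hK : KalmanRank A σ) (t : ℝ) (ht : 0 < t)
    (x : Vec n) (hx : x ≠ 0) : 0 < x ⬝ᵥ (SigmaMat A σ t *ᵥ x) := by
  classical
  set Ms : ℝ → Mat n := fun s => mexp ((t - s) • A) * (σ * σᵀ) * mexp ((t - s) • Aᵀ) with hMs
  set w : ℝ → Vec n := fun s => (mexp ((t - s) • A) * σ)ᵀ *ᵥ x with hw
  set q : ℝ → ℝ := fun s => (w s) ⬝ᵥ (w s) with hq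
  have hpoint : ∀ s, x ⬝ᵥ (Ms s *ᵥ x) = q s := by
    intro s
    show x ⬝ᵥ ((mexp ((t - s) • A) * (σ * σᵀ) * mexp ((t - s) • Aᵀ)) *ᵥ x) = q s
    rw [integrand_factor, quad_eq]
  have hcontM : ∀ i j, Continuous fun s => Ms s i j := by
    intro i j
    have hc : Continuous Ms := by
      exact ((continuous_mexp_smul A t).mul continuous_const).mul (continuous_mexp_smul Aᵀ t)
    exact (continuous_entry i j).comp hc
  have hcontq : Continuous q := by
    have hcw : Continuous w := by
      have h1 : Continuous fun s => (mexp ((t - s) • A) * σ)ᵀ :=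
        Continuous.matrix_transpose ((continuous_mexp_smul A t).mul continuous_const)
      have h2 : Continuous fun M : Mat n => M *ᵥ x :=
        (mulVecLM x).continuous_of_finiteDimensional
      exact h2.comp h1
    show Continuous fun s => (w s) ⬝ᵥ (w s)
    unfold dotProduct
    exact continuous_finset_sum _ fun i _ =>
      ((continuous_apply i).comp hcw).mul ((continuous_apply i).comp hcw)
  have hintM : ∀ i j, IntervalIntegrable (fun s => Ms s i j) volume 0 t :=
    fun i j => (hcontM i j).intervalIntegrable 0 t
  have hintq : IntervalIntegrable q volume 0 t := hcontq.intervalIntegrable 0 t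
  have hform : x ⬝ᵥ (SigmaMat A σ t *ᵥ x) = ∫ s in (0:ℝ)..t, q s := by
    have h1 : x ⬝ᵥ (SigmaMat A σ t *ᵥ x)
        = ∑ i, ∑ j, x i * ((∫ s in (0:ℝ)..t, Ms s i j) * x j) := by
      simp [dotProduct, Matrix.mulVec, SigmaMat, Finset.mul_sum, hMs]
    rw [h1]
    have hswap : ∀ i j, x i * ((∫ s in (0:ℝ)..t, Ms s i j) * x j)
        = ∫ s in (0:ℝ)..t, x i * (Ms s i j * x j) := by
      intro i j
      rw [← intervalIntegral.integral_mul_const, ← intervalIntegral.integral_const_mul]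
    simp_rw [hswap]
    have hint1 : ∀ i j : Fin n,
        IntervalIntegrable (fun s => x i * (Ms s i j * x j)) volume 0 t := fun i j =>
      (((hintM i j).mul_const _).const_mul _)
    have e1 : ∀ i : Fin n, (∑ j, ∫ s in (0:ℝ)..t, x i * (Ms s i j * x j))
        = ∫ s in (0:ℝ)..t, ∑ j, x i * (Ms s i j * x j) := fun i =>
      (intervalIntegral.integral_finset_sum fun j _ => hint1 i j).symm
    simp_rw [e1]
    have hint2 : ∀ i : Fin n,
        IntervalIntegrable (fun s => ∑ j, x i * (Ms s i j * x j)) volume 0 t := by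
      intro i
      apply Continuous.intervalIntegrable
      exact continuous_finset_sum _ fun j _ =>
        continuous_const.mul ((hcontM i j).mul continuous_const)
    rw [← intervalIntegral.integral_finset_sum fun i _ => hint2 i]
    congr 1; funext s
    rw [← hpoint s]
    simp [dotProduct, Matrix.mulVec, Finset.mul_sum]
  rw [hform]
  have hqnon : ∀ s, 0 ≤ q s := by
    intro s
    have : q s = ∑ i, w s i * w s i := rfl
    rw [this]
    exact Finset.sum_nonneg fun i _ => mul_self_nonneg _
  have hge : 0 ≤ ∫ s in (0:ℝ)..t, q s :=
    intervalIntegral.integral_nonneg ht.le fun u _ => hqnon u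
  refine lt_of_le_of_ne hge fun h0 => absurd ?_ hx
  have hI : (∫ s in (0:ℝ)..t, q s) = 0 := h0.symm
  -- support has measure zero
  have hq0 : 0 ≤ᵐ[volume] q := Filter.Eventually.of_forall hqnon
  have hsupp : volume (Function.support q ∩ Ioc 0 t) = 0 := by
    by_contra hpos
    have hpos' : 0 < volume (Function.support q ∩ Ioc 0 t) :=
      lt_of_le_of_ne zero_le (Ne.symm hpos)
    have := (intervalIntegral.integral_pos_iff_support_of_nonneg_ae hq0 hintq).mpr ⟨ht, hpos'⟩
    rw [hI] at this
    exact lt_irrefl 0 this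
  have hzero : ∀ s ∈ Ioo (0:ℝ) t, q s = 0 := by
    intro s hs
    by_contra hqs
    have hopen : IsOpen (q ⁻¹' ({0}ᶜ) ∩ Ioo 0 t) :=
      (isOpen_compl_singleton.preimage hcontq).inter isOpen_Ioo
    have hposv : 0 < volume (q ⁻¹' ({0}ᶜ) ∩ Ioo 0 t) :=
      hopen.measure_pos volume ⟨s, hqs, hs⟩
    have hsub : q ⁻¹' ({0}ᶜ) ∩ Ioo 0 t ⊆ Function.support q ∩ Ioc 0 t :=
      fun y hy => ⟨hy.1, Ioo_subset_Ioc_self hy.2⟩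
    have := measure_mono (μ := volume) hsub
    rw [hsupp] at this
    exact absurd this (not_le.mpr hposv)
  -- translate to the curve u ↦ σᵀ e^{uAᵀ} x
  have hw0 : ∀ u ∈ Ioo (0:ℝ) t, (σᵀ * mexp (u • Aᵀ)) *ᵥ x = 0 := by
    intro u hu
    have hs : t - u ∈ Ioo (0:ℝ) t := ⟨by linarith [hu.2], by linarith [hu.1]⟩
    have hq0' := hzero (t - u) hs
    have hwz : w (t - u) = 0 := dotProduct_self_eq_zero.mp hq0'
    rw [hw] at hwz
    simp only at hwz
    rw [show t - (t - u) = u by ring] at hwz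
    rwa [Matrix.transpose_mul, ← mexp_smul_transpose] at hwz
  have hk := key_induction Aᵀ σᵀ x hw0
  have hu0 : t / 2 ∈ Ioo (0:ℝ) t := ⟨by linarith, by linarith⟩
  set y := mexp ((t / 2) • Aᵀ) *ᵥ x with hy
  have hky : ∀ k : Fin n, ((A ^ (k : ℕ) * σ)ᵀ) *ᵥ y = 0 := by
    intro k
    have h2 : ((σᵀ * (Aᵀ) ^ (k : ℕ)) * mexp ((t / 2) • Aᵀ)) *ᵥ x = 0 := by
      rw [mul_assoc]; exact hk (k : ℕ) (t / 2) hu0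
    rw [← Matrix.mulVec_mulVec] at h2
    rw [Matrix.transpose_mul, Matrix.transpose_pow]
    exact h2
  have hy0 : y = 0 := kalman_inj A σ hK y hky
  have hx0 : mexp ((t / 2) • Aᵀ) *ᵥ x = 0 := by rw [← hy]; exact hy0
  exact mexp_mulVec_eq_zero hx0

lemma sigma_isHermitian (A σ : Mat n) (t : ℝ) : (SigmaMat A σ t).IsHermitian := by
  have hsym : ∀ u : ℝ, (mexp (u • A) * (σ * σᵀ) * mexp (u • Aᵀ))ᵀ
      = mexp (u • A) * (σ * σᵀ) * mexp (u • Aᵀ) := by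
    intro u
    rw [integrand_factor, Matrix.transpose_mul, Matrix.transpose_transpose]
  show (SigmaMat A σ t)ᴴ = SigmaMat A σ t
  funext i j
  show star ((SigmaMat A σ t) j i) = (SigmaMat A σ t) i j
  rw [star_trivial]
  show (∫ s in (0:ℝ)..t, (mexp ((t - s) • A) * (σ * σᵀ) * mexp ((t - s) • Aᵀ)) j i)
      = ∫ s in (0:ℝ)..t, (mexp ((t - s) • A) * (σ * σᵀ) * mexp ((t - s) • Aᵀ)) i j
  congr 1
  funext s
  conv_lhs => rw [← hsym (t - s)]
  rfl

end Stmt0Aux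

/-- Under the Kalman rank condition, the covariance matrix
Σ_t = ∫₀ᵗ e^{(t−s)A} σσᵀ e^{(t−s)Aᵀ} ds is positive definite (hence invertible)
for every t > 0. -/


theorem stmt_0 {n : ℕ} (A σ : Mat n) (hK : KalmanRank A σ) (t : ℝ) (ht : 0 < t) :
    (SigmaMat A σ t).PosDef ∧ IsUnit (SigmaMat A σ t) := by
  have hpos : (SigmaMat A σ t).PosDef := by
    refine Matrix.posDef_iff_dotProduct_mulVec.mpr ⟨Stmt0Aux.sigma_isHermitian A σ t, fun x hx => ?_⟩
    have hst : star x = x := funext fun i => rfl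
    rw [hst]
    exact Stmt0Aux.quadform_pos A σ hK t ht x hx
  exact ⟨hpos, hpos.isUnit⟩
end
end

section
/- (Linear kinetic Fokker–Planck, large friction.) For γ > 0 let A̲ := [[0,1],[−1,−γ]] and σ̲ := [[0,0],[0,√γ]] (2×2 real matrices), and let λ̲(2,t) := inf_{‖x‖_{ℝ²}=1} ⟨G̲_t x, x⟩ where G̲_t := ∫₀^t e^{−v A̲} σ̲ σ̲ᵀ e^{−v A̲ᵀ} dv. Then there exists γ_L > 2 such that for all γ ≥ γ_L and all t* ≥ 1: λ̲(2, t* γ) ≥ e^{t*}/16. -/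
open MeasureTheory Matrix Kronecker

noncomputable section

/-- matrix exponential e^M -/
def mexpG {m : Type*} [Fintype m] [DecidableEq m] (M : Matrix m m ℝ) : Matrix m m ℝ :=
  NormedSpace.exp M

open Classical in
/-- The positive semidefinite square root of a PSD matrix (junk value 0 otherwise). -/
def psdSqrtG {m : Type*} [Fintype m] [DecidableEq m] (M : Matrix m m ℝ) : Matrix m m ℝ :=
  if h : M.PosSemidef then h.1.eigenvectorUnitary.1 * diagonal ((↑) ∘ Real.sqrt ∘ h.1.eigenvalues) *
      (star h.1.eigenvectorUnitary : Matrix m m ℝ) else 0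

/-- G_t = ∫₀ᵗ e^{−vA} σσᵀ e^{−vAᵀ} dv, entrywise. -/
def GtG {m : Type*} [Fintype m] [DecidableEq m] (A σ : Matrix m m ℝ) (t : ℝ) : Matrix m m ℝ :=
  Matrix.of fun i j => ∫ v in (0:ℝ)..t, (mexpG ((-v) • A) * (σ * σᵀ) * mexpG ((-v) • Aᵀ)) i j

/-- Σ_t = ∫₀ᵗ e^{(t−s)A} σσᵀ e^{(t−s)Aᵀ} ds, entrywise. -/
def SigmaG {m : Type*} [Fintype m] [DecidableEq m] (A σ : Matrix m m ℝ) (t : ℝ) : Matrix m m ℝ :=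
  Matrix.of fun i j => ∫ s in (0:ℝ)..t, (mexpG ((t - s) • A) * (σ * σᵀ) * mexpG ((t - s) • Aᵀ)) i j

/-- standard Gaussian measure on (m → ℝ) -/
def stdGaussianG (m : Type*) [Fintype m] : Measure (m → ℝ) :=
  Measure.pi fun _ => ProbabilityTheory.gaussianReal 0 1

/-- The Markov semigroup: P_t f(x) = 𝔼[f(e^{tA}x + Σ_t^{1/2} Z)], Z standard Gaussian. -/
def PtG {m : Type*} [Fintype m] [DecidableEq m] (A σ : Matrix m m ℝ) (t : ℝ)
    (f : (m → ℝ) → ℝ) (x : m → ℝ) : ℝ :=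
  ∫ z, f (mexpG (t • A) *ᵥ x + psdSqrtG (SigmaG A σ t) *ᵥ z) ∂(stdGaussianG m)

/-- The underlying Kalman block matrix [σ̲, A̲σ̲, …, A̲^{j−1}σ̲]. -/
def kalmanU (j : ℕ) (Au σu : Matrix (Fin j) (Fin j) ℝ) : Matrix (Fin j) (Fin j × Fin j) ℝ :=
  Matrix.of fun i p => (Au ^ (p.1 : ℕ) * σu) i p.2

/-- λ̲(j,t) = inf_{‖z‖_{ℝʲ}=1} ⟨G̲_t z, z⟩. -/
def lamU (j : ℕ) (Au σu : Matrix (Fin j) (Fin j) ℝ) (t : ℝ) : ℝ :=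
  sInf { r : ℝ | ∃ z : Fin j → ℝ, z ⬝ᵥ z = 1 ∧ r = (GtG Au σu t *ᵥ z) ⬝ᵥ z }

set_option maxHeartbeats 4000000

lemma diag_two (x y : ℝ) : Matrix.diagonal ![x, y] = !![x, 0; 0, y] := by
  ext i j; fin_cases i <;> fin_cases j <;> simp [Matrix.diagonal_apply]

lemma exp_diag_two (x y : ℝ) :
    mexpG (Matrix.diagonal ![x, y]) = !![Real.exp x, 0; 0, Real.exp y] := by
  rw [mexpG, Matrix.exp_diagonal]
  have h : NormedSpace.exp ![x, y] = ![Real.exp x, Real.exp y] := by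
    funext i
    rw [Pi.coe_exp]
    fin_cases i <;> simp [← Real.exp_eq_exp_ℝ]
  rw [h, diag_two]

lemma expform (rm rp v : ℝ) (hμ : 0 < rp - rm) (hprod : rm * rp = 1) :
    mexpG ((-v) • (!![0, 1; -1, -(rm+rp)] : Matrix (Fin 2) (Fin 2) ℝ)ᵀ) =
      !![(rp*Real.exp (rm*v) - rm*Real.exp (rp*v))/(rp-rm),
          (Real.exp (rp*v) - Real.exp (rm*v))/(rp-rm);
         (Real.exp (rm*v) - Real.exp (rp*v))/(rp-rm),
          (rp*Real.exp (rp*v) - rm*Real.exp (rm*v))/(rp-rm)] := by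
  have hμ' : rp - rm ≠ 0 := ne_of_gt hμ
  have ht : ((!![0, 1; -1, -(rm+rp)] : Matrix (Fin 2) (Fin 2) ℝ))ᵀ = !![0, -1; 1, -(rm+rp)] := by
    ext i j; fin_cases i <;> fin_cases j <;> simp
  have hsm : (-v) • (!![0, -1; 1, -(rm+rp)] : Matrix (Fin 2) (Fin 2) ℝ) =
      !![0, v; -v, v*(rm+rp)] := by
    ext i j; fin_cases i <;> fin_cases j <;> simp <;> ring
  set P : Matrix (Fin 2) (Fin 2) ℝ := !![1, 1; rm, rp] with hP
  set Q : Matrix (Fin 2) (Fin 2) ℝ := !![rp/(rp-rm), -(1/(rp-rm)); -(rm/(rp-rm)), 1/(rp-rm)] with hQ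
  have hPQ : P * Q = 1 := by
    rw [hP, hQ, Matrix.mul_fin_two]
    ext i j
    fin_cases i <;> fin_cases j <;> simp [Matrix.one_apply] <;> field_simp <;> ring
  have hPinv : P⁻¹ = Q := Matrix.inv_eq_right_inv hPQ
  have hdet : P.det = rp - rm := by rw [hP, Matrix.det_fin_two_of]; ring
  have hPu : IsUnit P := by
    rw [Matrix.isUnit_iff_isUnit_det, hdet]; exact isUnit_iff_ne_zero.2 hμ'
  have hconj : (-v) • (!![0, 1; -1, -(rm+rp)] : Matrix (Fin 2) (Fin 2) ℝ)ᵀ =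
      P * Matrix.diagonal ![rm*v, rp*v] * P⁻¹ := by
    rw [hPinv, ht, hsm, hP, hQ, diag_two, Matrix.mul_fin_two, Matrix.mul_fin_two]
    ext i j
    fin_cases i <;> fin_cases j <;>
      · simp
        try field_simp
        first
          | ring1
          | linear_combination (v*(rp - rm)) * hprod
          | linear_combination (v*(rm - rp)) * hprod
  rw [mexpG, hconj, Matrix.exp_conj P (Matrix.diagonal ![rm*v, rp*v]) hPu, hPinv]
  rw [show NormedSpace.exp (Matrix.diagonal ![rm*v, rp*v]) = mexpG (Matrix.diagonal ![rm*v, rp*v]) from rfl,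
    exp_diag_two, hP, hQ, Matrix.mul_fin_two, Matrix.mul_fin_two]
  ext i j
  fin_cases i <;> fin_cases j <;>
    · simp
      try field_simp
      first
        | ring1
        | linear_combination (Real.exp (v*rp) - Real.exp (rm*v)) * hprod
        | linear_combination (Real.exp (rm*v) - Real.exp (v*rp)) * hprod
        | linear_combination (Real.exp (rp*v) - Real.exp (rm*v)) * hprod
        | linear_combination (Real.exp (rm*v) - Real.exp (rp*v)) * hprod

lemma trans_two (a b c d : ℝ) : (!![a, b; c, d] : Matrix (Fin 2) (Fin 2) ℝ)ᵀ = !![a, c; b, d] := by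
  ext i j; fin_cases i <;> fin_cases j <;> simp

lemma Jexp (c T : ℝ) (hc : c ≠ 0) :
    ∫ v in (0:ℝ)..T, Real.exp (c*v) = (Real.exp (c*T) - 1)/c := by
  rw [intervalIntegral.integral_comp_mul_left (fun x => Real.exp x) hc]
  simp [integral_exp, div_eq_inv_mul]

lemma contexp (k : ℝ) : Continuous fun v : ℝ => Real.exp (k*v) :=
  Real.continuous_exp.comp (continuous_const.mul continuous_id)

lemma tri (c1 c2 c3 k1 k2 k3 T : ℝ) (h1 : k1 ≠ 0) (h2 : k2 ≠ 0) (h3 : k3 ≠ 0) (f : ℝ → ℝ)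
    (hf : ∀ v, f v = c1*Real.exp (k1*v) + c2*Real.exp (k2*v) + c3*Real.exp (k3*v)) :
    ∫ v in (0:ℝ)..T, f v =
      c1*((Real.exp (k1*T)-1)/k1) + c2*((Real.exp (k2*T)-1)/k2) + c3*((Real.exp (k3*T)-1)/k3) := by
  rw [intervalIntegral.integral_congr
    (g := fun v => c1*Real.exp (k1*v) + c2*Real.exp (k2*v) + c3*Real.exp (k3*v)) (fun v _ => hf v)]
  rw [intervalIntegral.integral_add (f := fun v => c1*Real.exp (k1*v) + c2*Real.exp (k2*v))
      (g := fun v => c3*Real.exp (k3*v))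
      ((continuous_const.mul (contexp k1)).intervalIntegrable 0 T |>.add
        ((continuous_const.mul (contexp k2)).intervalIntegrable 0 T))
      ((continuous_const.mul (contexp k3)).intervalIntegrable 0 T),
    intervalIntegral.integral_add (f := fun v => c1*Real.exp (k1*v)) (g := fun v => c2*Real.exp (k2*v))
      ((continuous_const.mul (contexp k1)).intervalIntegrable 0 T)
      ((continuous_const.mul (contexp k2)).intervalIntegrable 0 T),
    intervalIntegral.integral_const_mul, intervalIntegral.integral_const_mul,
    intervalIntegral.integral_const_mul, Jexp _ _ h1, Jexp _ _ h2, Jexp _ _ h3]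

lemma quadform (rm rp T : ℝ) (z : Fin 2 → ℝ) (hrm : 0 < rm) (hμ : 0 < rp - rm)
    (hprod : rm*rp = 1) :
    (GtG (!![0, 1; -1, -(rm+rp)] : Matrix (Fin 2) (Fin 2) ℝ)
        (!![0, 0; 0, Real.sqrt (rm+rp)] : Matrix (Fin 2) (Fin 2) ℝ) T *ᵥ z) ⬝ᵥ z
      = ((rm+rp)/(rp-rm)^2) *
          ((z 0 - rm*z 1)^2 * ((Real.exp (2*rm*T)-1)/(2*rm))
            + 2*((z 0 - rm*z 1)*((rp*z 1 - z 0))) * ((Real.exp ((rm+rp)*T)-1)/(rm+rp))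
            + (rp*z 1 - z 0)^2 * ((Real.exp (2*rp*T)-1)/(2*rp))) := by
  have hrp : 0 < rp := by linarith
  have hγ : 0 < rm + rp := by linarith
  have hμ' : rp - rm ≠ 0 := ne_of_gt hμ
  set A : Matrix (Fin 2) (Fin 2) ℝ := !![0, 1; -1, -(rm+rp)] with hA
  set σm : Matrix (Fin 2) (Fin 2) ℝ := !![0, 0; 0, Real.sqrt (rm+rp)] with hσm
  set G0 : ℝ → ℝ := fun v => (Real.exp (rm*v) - Real.exp (rp*v))/(rp-rm) with hG0
  set G1 : ℝ → ℝ := fun v => (rp*Real.exp (rp*v) - rm*Real.exp (rm*v))/(rp-rm) with hG1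
  have hσσ : σm * σmᵀ = !![0, 0; 0, rm+rp] := by
    rw [hσm, trans_two, Matrix.mul_fin_two]
    ext i j
    fin_cases i <;> fin_cases j <;> simp [Real.mul_self_sqrt hγ.le]
  have hME : ∀ v : ℝ, mexpG ((-v) • A) = (mexpG ((-v) • Aᵀ))ᵀ := by
    intro v
    have h : (-v) • A = (((-v) • Aᵀ)ᵀ) := by
      rw [Matrix.transpose_smul, Matrix.transpose_transpose]
    rw [h, mexpG, mexpG, Matrix.exp_transpose]
  have hent : ∀ (v : ℝ) (i j : Fin 2),
      (mexpG ((-v) • A) * (σm * σmᵀ) * mexpG ((-v) • Aᵀ)) i j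
        = (rm+rp) * (![G0, G1] i v) * (![G0, G1] j v) := by
    intro v i j
    rw [hME v, hσσ, hA, expform rm rp v hμ hprod, trans_two]
    fin_cases i <;> fin_cases j <;>
      · simp [Matrix.mul_apply, Fin.sum_univ_two, hG0, hG1]
        left
        ring1
  have hGt : ∀ i j : Fin 2, GtG A σm T i j
      = ∫ v in (0:ℝ)..T, (rm+rp) * (![G0, G1] i v) * (![G0, G1] j v) := by
    intro i j
    simp only [GtG, Matrix.of_apply]
    exact intervalIntegral.integral_congr (fun v _ => hent v i j)
  have e : (GtG A σm T *ᵥ z) ⬝ᵥ z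
      = GtG A σm T 0 0 * (z 0 * z 0) + GtG A σm T 0 1 * (z 0 * z 1)
        + GtG A σm T 1 0 * (z 1 * z 0) + GtG A σm T 1 1 * (z 1 * z 1) := by
    simp [Matrix.mulVec, dotProduct, Fin.sum_univ_two]
    ring
  have h2rm : (2*rm : ℝ) ≠ 0 := by positivity
  have h2rp : (2*rp : ℝ) ≠ 0 := by positivity
  have hγ' : (rm+rp : ℝ) ≠ 0 := ne_of_gt hγ
  have hI00 : GtG A σm T 0 0
      = ((rm+rp)/(rp-rm)^2)*((Real.exp (2*rm*T)-1)/(2*rm))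
        + (-2*(rm+rp)/(rp-rm)^2)*((Real.exp ((rm+rp)*T)-1)/(rm+rp))
        + ((rm+rp)/(rp-rm)^2)*((Real.exp (2*rp*T)-1)/(2*rp)) := by
    rw [hGt 0 0]
    apply tri _ _ _ _ _ _ _ h2rm hγ' h2rp
    intro v
    simp only [Matrix.cons_val_zero, hG0]
    rw [show 2*rm*v = rm*v + rm*v by ring, Real.exp_add,
      show (rm+rp)*v = rm*v + rp*v by ring, Real.exp_add,
      show 2*rp*v = rp*v + rp*v by ring, Real.exp_add]
    field_simp
    ring1
  have hI01 : GtG A σm T 0 1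
      = (-(rm+rp)*rm/(rp-rm)^2)*((Real.exp (2*rm*T)-1)/(2*rm))
        + ((rm+rp)*(rm+rp)/(rp-rm)^2)*((Real.exp ((rm+rp)*T)-1)/(rm+rp))
        + (-(rm+rp)*rp/(rp-rm)^2)*((Real.exp (2*rp*T)-1)/(2*rp)) := by
    rw [hGt 0 1]
    apply tri _ _ _ _ _ _ _ h2rm hγ' h2rp
    intro v
    simp only [Matrix.cons_val_zero, Matrix.cons_val_one, Matrix.head_cons, hG0, hG1]
    rw [show 2*rm*v = rm*v + rm*v by ring, Real.exp_add,
      show (rm+rp)*v = rm*v + rp*v by ring, Real.exp_add,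
      show 2*rp*v = rp*v + rp*v by ring, Real.exp_add]
    field_simp
    ring1
  have hI10 : GtG A σm T 1 0
      = (-(rm+rp)*rm/(rp-rm)^2)*((Real.exp (2*rm*T)-1)/(2*rm))
        + ((rm+rp)*(rm+rp)/(rp-rm)^2)*((Real.exp ((rm+rp)*T)-1)/(rm+rp))
        + (-(rm+rp)*rp/(rp-rm)^2)*((Real.exp (2*rp*T)-1)/(2*rp)) := by
    rw [hGt 1 0]
    apply tri _ _ _ _ _ _ _ h2rm hγ' h2rp
    intro v
    simp only [Matrix.cons_val_zero, Matrix.cons_val_one, Matrix.head_cons, hG0, hG1]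
    rw [show 2*rm*v = rm*v + rm*v by ring, Real.exp_add,
      show (rm+rp)*v = rm*v + rp*v by ring, Real.exp_add,
      show 2*rp*v = rp*v + rp*v by ring, Real.exp_add]
    field_simp
    ring1
  have hI11 : GtG A σm T 1 1
      = ((rm+rp)*rm*rm/(rp-rm)^2)*((Real.exp (2*rm*T)-1)/(2*rm))
        + (-2*(rm+rp)*(rm*rp)/(rp-rm)^2)*((Real.exp ((rm+rp)*T)-1)/(rm+rp))
        + ((rm+rp)*rp*rp/(rp-rm)^2)*((Real.exp (2*rp*T)-1)/(2*rp)) := by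
    rw [hGt 1 1]
    apply tri _ _ _ _ _ _ _ h2rm hγ' h2rp
    intro v
    simp only [Matrix.cons_val_one, Matrix.head_cons, Matrix.cons_val_zero, hG1]
    rw [show 2*rm*v = rm*v + rm*v by ring, Real.exp_add,
      show (rm+rp)*v = rm*v + rp*v by ring, Real.exp_add,
      show 2*rp*v = rp*v + rp*v by ring, Real.exp_add]
    field_simp
    ring1
  rw [e, hI00, hI01, hI10, hI11]
  field_simp
  ring1

/-- linear kinetic Fokker–Planck, large friction: with
A̲ = [[0,1],[−1,−γ]] and σ̲ = [[0,0],[0,√γ]], there is γ_L > 2 such that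
λ̲(2, t*γ) ≥ e^{t*}/16 for all γ ≥ γ_L and t* ≥ 1. -/
theorem stmt_17 :
    ∃ γL : ℝ, 2 < γL ∧ ∀ γ : ℝ, γL ≤ γ → ∀ tstar : ℝ, 1 ≤ tstar →
      lamU 2 (!![0, 1; -1, -γ] : Matrix (Fin 2) (Fin 2) ℝ)
          (!![0, 0; 0, Real.sqrt γ] : Matrix (Fin 2) (Fin 2) ℝ) (tstar * γ)
        ≥ Real.exp tstar / 16 := by
  refine ⟨10, by norm_num, ?_⟩
  intro γ hγ tstar ht
  have hγ0 : (0:ℝ) < γ := by linarith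
  set μ := Real.sqrt (γ^2 - 4) with hμdef
  have hμsq : μ^2 = γ^2 - 4 := Real.sq_sqrt (by nlinarith only [hγ])
  have hμ0 : 0 < μ := Real.sqrt_pos.2 (by nlinarith only [hγ])
  have hμltγ : μ < γ := by nlinarith only [hμsq, hμ0, hγ0]
  set rm := (γ - μ)/2 with hrmdef
  set rp := (γ + μ)/2 with hrpdef
  have hsum : rm + rp = γ := by rw [hrmdef, hrpdef]; ring
  have hdiff : rp - rm = μ := by rw [hrmdef, hrpdef]; ring
  have hprod : rm * rp = 1 := by
    rw [hrmdef, hrpdef]; linear_combination (-(1:ℝ)/4) * hμsq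
  have hrm0 : 0 < rm := by rw [hrmdef]; linarith
  have hrp0 : 0 < rp := by rw [hrpdef]; linarith
  have hdp : 0 < rp - rm := by rw [hdiff]; exact hμ0
  have hrmγ : 1 ≤ rm * γ := by nlinarith only [hprod, hsum, hrm0, sq_nonneg rm]
  have hrmγ2 : rm * γ ≤ 2 := by
    nlinarith only [hprod, hsum, hrm0, hdp, mul_pos hrm0 hdp]
  have hrpγl : γ/2 ≤ rp := by rw [hrpdef]; linarith [hμ0]
  have hrpγu : rp ≤ γ := by rw [hrpdef]; linarith
  have hAeq : (!![0, 1; -1, -γ] : Matrix (Fin 2) (Fin 2) ℝ) = !![0, 1; -1, -(rm+rp)] := by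
    rw [hsum]
  have hσeq : (!![0, 0; 0, Real.sqrt γ] : Matrix (Fin 2) (Fin 2) ℝ)
      = !![0, 0; 0, Real.sqrt (rm+rp)] := by rw [hsum]
  rw [ge_iff_le]
  unfold lamU
  refine le_csInf ⟨_, ![1,0], by norm_num [dotProduct, Fin.sum_univ_two], rfl⟩ ?_
  rintro r ⟨z, hz, rfl⟩
  rw [hAeq, hσeq, quadform rm rp (tstar*γ) z hrm0 hdp hprod, hsum, hdiff]
  clear hAeq hσeq
  set T := tstar * γ with hT
  set a := z 0 - rm * z 1 with hadef
  set b := rp * z 1 - z 0 with hbdef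
  set E1 := Real.exp (2*rm*T) with hE1def
  set E2 := Real.exp (γ*T) with hE2def
  set E3 := Real.exp (2*rp*T) with hE3def
  set J1 := (E1 - 1)/(2*rm) with hJ1def
  set J2 := (E2 - 1)/γ with hJ2def
  set J3 := (E3 - 1)/(2*rp) with hJ3def
  set S := a^2*J1 + 2*(a*b)*J2 + b^2*J3 with hSdef
  have hz2 : z 0 * z 0 + z 1 * z 1 = 1 := by
    simpa [dotProduct, Fin.sum_univ_two] using hz
  clear hz
  clear_value S J3 J2 J1 E3 E2 E1 b a T rp rm μ
  have hTγ : γ ≤ T := by rw [hT]; nlinarith only [ht, hγ0]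
  have hT0 : 0 < T := by linarith
  have hT10 : 10 ≤ T := by linarith
  have hrp5 : 5 ≤ rp := by linarith
  have hexp2 : (7:ℝ) ≤ Real.exp 2 := by
    rw [show (2:ℝ) = 1+1 by norm_num, Real.exp_add]
    nlinarith only [Real.exp_one_gt_d9]
  have hexpt2 : (2:ℝ) ≤ Real.exp tstar := by
    have h1 : Real.exp 1 ≤ Real.exp tstar := Real.exp_le_exp.mpr ht
    nlinarith only [h1, Real.exp_one_gt_d9]
  have hrmT : 1 ≤ rm * T := by rw [hT]; nlinarith only [hrmγ, hrm0, ht, hγ0]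
  have hrpT : 1 ≤ rp * T := by nlinarith only [hrp5, hT10]
  have hE1lb : Real.exp (2*tstar) ≤ E1 := by
    rw [hE1def]
    apply Real.exp_le_exp.mpr
    rw [hT]; nlinarith only [hrmγ, ht, hγ0, hrm0]
  have hE1_7 : (7:ℝ) ≤ E1 := by
    refine le_trans hexp2 ?_
    rw [hE1def]; exact Real.exp_le_exp.mpr (by nlinarith only [hrmT])
  have hE3_7 : (7:ℝ) ≤ E3 := by
    refine le_trans hexp2 ?_
    rw [hE3def]; exact Real.exp_le_exp.mpr (by nlinarith only [hrpT])
  have hE1pos : 0 < E1 := by rw [hE1def]; exact Real.exp_pos _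
  have hE2pos : 0 < E2 := by rw [hE2def]; exact Real.exp_pos _
  have hE3pos : 0 < E3 := by rw [hE3def]; exact Real.exp_pos _
  have hE2sq : E2^2 = E1*E3 := by
    rw [hE1def, hE2def, hE3def, sq, ← Real.exp_add, ← Real.exp_add]
    congr 1
    rw [← hsum]; ring
  have hE2_1 : 1 ≤ E2 := by
    rw [hE2def]
    nlinarith only [Real.add_one_le_exp (γ*T), mul_pos hγ0 hT0]
  have hE1t : 2*Real.exp tstar ≤ E1 := by
    have h1 : Real.exp (2*tstar) = Real.exp tstar * Real.exp tstar := by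
      rw [← Real.exp_add]; congr 1; ring
    have h2 : 2*Real.exp tstar ≤ Real.exp tstar * Real.exp tstar := by
      nlinarith only [Real.exp_pos tstar, hexpt2]
    linarith only [h1, h2, hE1lb]
  have hγsq : 100 ≤ γ^2 := by nlinarith only [hγ]
  have hE3big : Real.exp tstar * γ^2 ≤ E3 := by
    have h2rp : γ ≤ 2*rp := by linarith
    have h1 : Real.exp (γ^2 * tstar) ≤ E3 := by
      rw [hE3def]
      apply Real.exp_le_exp.mpr
      rw [hT]
      nlinarith only [h2rp, mul_pos (show (0:ℝ) < tstar by linarith) hγ0]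
    have h2 : Real.exp (γ^2*tstar) = Real.exp tstar * Real.exp ((γ^2-1)*tstar) := by
      rw [← Real.exp_add]; congr 1; ring
    have h3 : γ^2 ≤ Real.exp ((γ^2-1)*tstar) := by
      nlinarith only [Real.add_one_le_exp ((γ^2-1)*tstar), ht, hγsq]
    nlinarith only [Real.exp_pos tstar, h1, h2, h3]
  have hJ1pos : 0 < J1 := by
    rw [hJ1def]; exact div_pos (by linarith) (by linarith)
  have hJ2pos : 0 < J2 := by
    have h1 : 1 < E2 := by
      rw [hE2def]
      nlinarith only [Real.add_one_le_exp (γ*T), mul_pos hγ0 hT0]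
    rw [hJ2def]; exact div_pos (by linarith) hγ0
  have hJ3pos : 0 < J3 := by
    rw [hJ3def]; exact div_pos (by linarith) (by linarith)
  have hγJ2 : γ * J2 = E2 - 1 := by rw [hJ2def]; field_simp
  have hJ1lb : (3/14)*γ*E1 ≤ J1 := by
    rw [hJ1def, le_div_iff₀ (by linarith)]
    nlinarith only [hE1_7,
      mul_le_mul_of_nonneg_left hrmγ2 (show (0:ℝ) ≤ (3/7)*E1 by linarith only [hE1pos])]
  have hJ1ub : J1 ≤ (γ/2)*E1 := by
    rw [hJ1def, div_le_iff₀ (by linarith)]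
    nlinarith only [mul_le_mul_of_nonneg_left hrmγ (le_of_lt hE1pos)]
  have hJ3lb : (3/7)*E3/γ ≤ J3 := by
    rw [hJ3def, div_le_div_iff₀ hγ0 (by linarith)]
    nlinarith only [hE3_7, hγ0,
      mul_le_mul_of_nonneg_left hrpγu (show (0:ℝ) ≤ (6/7)*E3 by linarith only [hE3pos])]
  have hγJ3ub : γ * J3 ≤ E3 := by
    rw [hJ3def, ← mul_div_assoc, div_le_iff₀ (by linarith)]
    nlinarith only [hγ0, hE3pos, mul_le_mul_of_nonneg_right hrpγl (le_of_lt hE3pos)]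
  have hJ2sqb : J2^2 * γ^2 ≤ E1*E3 := by
    have h5 : J2^2 * γ^2 = (E2-1)^2 := by rw [← hγJ2]; ring
    nlinarith only [hE2sq, hE2_1, h5]
  have hJ2sq100 : 100 * J2^2 ≤ E1 * E3 := by
    nlinarith only [hJ2sqb,
      mul_nonneg (show (0:ℝ) ≤ γ^2 - 100 by linarith) (sq_nonneg J2)]
  have hJ13 : (9/98)*(E1*E3) ≤ J1*J3 := by
    have hc : ((3/14)*γ*E1) * ((3/7)*E3/γ) = (9/98)*(E1*E3) := by
      field_simp; ring
    have h6 := mul_le_mul hJ1lb hJ3lb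
      (div_nonneg (by linarith only [hE3pos]) hγ0.le) (le_of_lt hJ1pos)
    rw [hc] at h6
    exact h6
  have hgap : (2/25)*(E1*E3) ≤ J1*J3 - J2^2 := by
    linarith only [hJ13, hJ2sq100, mul_pos hE1pos hE3pos]
  have hcase : (81/100 : ℝ) ≤ a^2 ∨ (81/100 : ℝ) ≤ b^2 := by
    by_contra hcon
    push_neg at hcon
    obtain ⟨ha1, hb1⟩ := hcon
    have hz1 : μ * z 1 = a + b := by rw [hadef, hbdef, ← hdiff]; ring
    have hz0 : z 0 = a + rm * z 1 := by rw [hadef]; ring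
    have hμ81 : (81:ℝ) ≤ μ^2 := by nlinarith only [hμsq, hγ]
    have hz1sq : μ^2 * (z 1)^2 = (a+b)^2 := by
      linear_combination (μ * z 1 + a + b) * hz1
    have hz1b : (z 1)^2 ≤ 1/25 := by
      nlinarith only [hz1sq, ha1.le, hb1.le, sq_nonneg (a-b),
        mul_nonneg (show (0:ℝ) ≤ μ^2 - 81 by linarith) (sq_nonneg (z 1))]
    have hrm02 : rm ≤ 1/5 := by nlinarith only [hrmγ2, hrm0, hγ]
    have hrmsq : rm^2 ≤ 1/25 := by nlinarith only [hrm0, hrm02]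
    have hrmz1 : (rm * z 1)^2 ≤ 1/625 := by
      nlinarith only [mul_le_mul_of_nonneg_right hrmsq (sq_nonneg (z 1)), hz1b]
    have hz0sq : (z 0)^2 = a^2 + 2*(a*(rm*z 1)) + (rm*z 1)^2 := by rw [hz0]; ring
    nlinarith only [hz2, hz0sq, ha1.le, hb1.le, hrmz1, hz1b,
      sq_nonneg ((1/5)*a - 5*(rm*z 1))]
  have hconc : Real.exp tstar * γ ≤ 16 * S → Real.exp tstar / 16 ≤ γ/μ^2 * S := by
    intro hfin
    rw [div_mul_eq_mul_div, div_le_div_iff₀ (by norm_num) (pow_pos hμ0 2)]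
    nlinarith only [hfin, hμsq, hγ0, Real.exp_pos tstar,
      mul_le_mul_of_nonneg_left hfin hγ0.le]
  rcases hcase with ha | hb
  · apply hconc
    have hid : a^2*(J1*J3) - a^2*J2^2 + (a*J2 + b*J3)^2 = S * J3 := by
      rw [hSdef]; ring
    have hSJ : a^2*(J1*J3) - a^2*J2^2 ≤ S * J3 := by
      nlinarith only [hid, sq_nonneg (a*J2 + b*J3)]
    have hstep1 : Real.exp tstar * γ * J3 ≤ Real.exp tstar * E3 := by
      nlinarith only [mul_le_mul_of_nonneg_left hγJ3ub (le_of_lt (Real.exp_pos tstar))]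
    have hstep2 : Real.exp tstar * E3 ≤ (1/2)*(E1*E3) := by
      nlinarith only [mul_nonneg (show (0:ℝ) ≤ E1/2 - Real.exp tstar by linarith)
        (le_of_lt hE3pos)]
    have hstep3 : (1/2)*(E1*E3) ≤ 16*(a^2*(J1*J3 - J2^2)) := by
      have h6 := mul_le_mul ha hgap
        (by nlinarith only [mul_pos hE1pos hE3pos]) (sq_nonneg a)
      nlinarith only [h6, mul_pos hE1pos hE3pos]
    have h7 : (Real.exp tstar * γ) * J3 ≤ (16*S) * J3 := by
      nlinarith only [hSJ, hstep1, hstep2, hstep3]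
    exact le_of_mul_le_mul_right h7 hJ3pos
  · apply hconc
    have hid : b^2*(J1*J3) - b^2*J2^2 + (a*J1 + b*J2)^2 = S * J1 := by
      rw [hSdef]; ring
    have hSJ : b^2*(J1*J3) - b^2*J2^2 ≤ S * J1 := by
      nlinarith only [hid, sq_nonneg (a*J1 + b*J2)]
    have hstep1 : Real.exp tstar * γ * J1 ≤ Real.exp tstar * γ * ((γ/2)*E1) := by
      nlinarith only [mul_le_mul_of_nonneg_left hJ1ub
        (mul_nonneg (le_of_lt (Real.exp_pos tstar)) hγ0.le)]
    have hstep2 : Real.exp tstar * γ * ((γ/2)*E1) ≤ (1/2)*(E1*E3) := by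
      nlinarith only [mul_le_mul_of_nonneg_right hE3big (le_of_lt hE1pos)]
    have hstep3 : (1/2)*(E1*E3) ≤ 16*(b^2*(J1*J3 - J2^2)) := by
      have h6 := mul_le_mul hb hgap
        (by nlinarith only [mul_pos hE1pos hE3pos]) (sq_nonneg b)
      nlinarith only [h6, mul_pos hE1pos hE3pos]
    have h7 : (Real.exp tstar * γ) * J1 ≤ (16*S) * J1 := by
      nlinarith only [hSJ, hstep1, hstep2, hstep3]
    exact le_of_mul_le_mul_right h7 hJ1pos
end
end
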